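/- Every connected cubic graph admits a decomposition of its edge set into a spanning tree, a collection of vertex-disjoint paths, and a collection of vertex-disjoint cycles (where the path or cycle collections may be empty). -/

import Mathlib

open SimpleGraph

/-- The degree of a vertex (as the cardinality of its neighbor set). -/
noncomputable def deg {V : Type} (G : SimpleGraph V) (v : V) : ℕ := (G.neighborSet v).ncard

/-- A set of edges forms a matching: no two of its edges share a vertex. -/
def IsMatchingSet {V : Type} (M : Set (Sym2 V)) : Prop :=
  ∀ v : V, {e ∈ M | v ∈ e}.Subsingleton

/-- Decomposition of `G` into a spanning tree (with edge set `T`) and a matching `M`. -/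
def IsTM {V : Type} (G : SimpleGraph V) (T M : Set (Sym2 V)) : Prop :=
  T ∪ M = G.edgeSet ∧ Disjoint T M ∧
  (SimpleGraph.fromEdgeSet T).Connected ∧ (SimpleGraph.fromEdgeSet T).IsAcyclic ∧
  IsMatchingSet M

/-- `G` decomposes into a spanning tree and a matching. -/
def HasTM {V : Type} (G : SimpleGraph V) : Prop := ∃ T M, IsTM G T M

/-- Every cycle of `G` is separating: deleting its edges disconnects the graph. -/
def Separating {V : Type} (G : SimpleGraph V) : Prop :=
  ∀ (v : V) (c : G.Walk v v), c.IsCycle →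
    ¬ (G.deleteEdges {e | e ∈ c.edges}).Connected


variable {V : Type}

lemma exists_first_edge {H : SimpleGraph V} {x v : V} (q : H.Walk x v) (h : x ≠ v) :
    ∃ b, s(x, b) ∈ q.edges := by
  cases q with
  | nil => exact absurd rfl h
  | @cons _ b' _ h' q' => exact ⟨b', by simp⟩

lemma cycle_two_neighbors {H : SimpleGraph V} {v : V} (c : H.Walk v v) (hc : c.IsCycle) :
    ∃ a b, a ≠ b ∧ s(v, a) ∈ c.edges ∧ s(v, b) ∈ c.edges := by
  cases c with
  | nil => exact absurd hc Walk.IsCycle.not_of_nil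
  | @cons _ x _ h q =>
    rw [Walk.cons_isCycle_iff] at hc
    obtain ⟨b, hb⟩ := exists_first_edge q.reverse h.ne
    rw [Walk.edges_reverse, List.mem_reverse] at hb
    refine ⟨x, b, ?_, by simp, by simp [hb]⟩
    rintro rfl
    exact hc.2 hb

lemma reachable_of_reachable_delete {H : SimpleGraph V} {a b : V}
    (hr : (H \ fromEdgeSet {s(a, b)}).Reachable a b) {y z : V}
    (h : H.Reachable y z) : (H \ fromEdgeSet {s(a, b)}).Reachable y z := by
  obtain ⟨p⟩ := h
  induction p with
  | nil => exact Reachable.refl _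
  | @cons u v' w hadj q ih =>
    refine Reachable.trans ?_ ih
    by_cases he : s(u, v') = s(a, b)
    · rw [Sym2.eq_iff] at he
      rcases he with ⟨rfl, rfl⟩ | ⟨rfl, rfl⟩
      · exact hr
      · exact hr.symm
    · refine Adj.reachable ?_
      rw [sdiff_adj]
      exact ⟨hadj, fun hk => he (((fromEdgeSet_adj _).mp hk).1)⟩

lemma exists_spanning_tree_edges [Finite V] (G : SimpleGraph V) (hconn : G.Connected) :
    ∃ S, S ⊆ G.edgeSet ∧ (fromEdgeSet S).Connected ∧ (fromEdgeSet S).IsAcyclic := by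
  classical
  haveI : Nonempty V := hconn.nonempty
  have hne : {n | ∃ S, (S ⊆ G.edgeSet ∧ (fromEdgeSet S).Connected) ∧ S.ncard = n}.Nonempty :=
    ⟨G.edgeSet.ncard, G.edgeSet, ⟨subset_rfl, by rwa [fromEdgeSet_edgeSet]⟩, rfl⟩
  obtain ⟨S, hS, hcard⟩ := Nat.sInf_mem hne
  refine ⟨S, hS.1, hS.2, ?_⟩
  by_contra hcyc
  rw [IsAcyclic] at hcyc
  push_neg at hcyc
  obtain ⟨v, c, hc⟩ := hcyc
  cases c with
  | nil => exact Walk.IsCycle.not_of_nil hc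
  | @cons _ x _ hadj q =>
    have hmem : s(v, x) ∈ (Walk.cons hadj q).edges := by simp
    obtain ⟨hvx, hreach⟩ :=
      (adj_and_reachable_delete_edges_iff_exists_cycle (G := fromEdgeSet S)).mpr
        ⟨v, _, hc, hmem⟩
    have hconn' : (fromEdgeSet (S \ {s(v, x)})).Connected := by
      rw [fromEdgeSet_sdiff]
      exact ⟨fun y z => reachable_of_reachable_delete hreach (hS.2.preconnected y z)⟩
    have hmemS : s(v, x) ∈ S := by
      have h2 : s(v, x) ∈ (fromEdgeSet S).edgeSet := hvx
      rw [edgeSet_fromEdgeSet] at h2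
      exact h2.1
    have hlt : (S \ {s(v, x)}).ncard < S.ncard :=
      Set.ncard_diff_singleton_lt_of_mem hmemS S.toFinite
    have hle : sInf {n | ∃ S, (S ⊆ G.edgeSet ∧ (fromEdgeSet S).Connected) ∧ S.ncard = n}
        ≤ (S \ {s(v, x)}).ncard :=
      Nat.sInf_le ⟨S \ {s(v, x)}, ⟨Set.diff_subset.trans hS.1, hconn'⟩, rfl⟩
    omega


theorem stmt_1_aux {V : Type} [Finite V] (G : SimpleGraph V) (hconn : G.Connected)
    (hcubic : ∀ v, (G.neighborSet v).ncard = 3) :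
    ∃ T P C : Set (Sym2 V),
      T ∪ P ∪ C = G.edgeSet ∧ Disjoint T P ∧ Disjoint T C ∧ Disjoint P C ∧
      (SimpleGraph.fromEdgeSet T).Connected ∧ (SimpleGraph.fromEdgeSet T).IsAcyclic ∧
      (SimpleGraph.fromEdgeSet P).IsAcyclic ∧
      (∀ v, ((SimpleGraph.fromEdgeSet P).neighborSet v).ncard ≤ 2) ∧
      (∀ v, ((SimpleGraph.fromEdgeSet C).neighborSet v).ncard = 0 ∨
        ((SimpleGraph.fromEdgeSet C).neighborSet v).ncard = 2) := by
  classical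
  obtain ⟨T, hTsub, hTconn, hTacyc⟩ := exists_spanning_tree_edges G hconn
  set R : Set (Sym2 V) := G.edgeSet \ T with hRdef
  set H : SimpleGraph V := fromEdgeSet R with hHdef
  have hHedge : H.edgeSet = R := by
    rw [hHdef, edgeSet_fromEdgeSet]
    ext e
    simp only [Set.mem_diff, Set.mem_setOf_eq]
    exact ⟨fun h => h.1, fun h => ⟨h, G.not_isDiag_of_mem_edgeSet h.1⟩⟩
  set C : Set (Sym2 V) := {e | ∃ (u : V) (c : H.Walk u u), c.IsCycle ∧ e ∈ c.edges} with hCdef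
  have hCR : C ⊆ R := by
    rintro e ⟨u, c, hc, he⟩
    rw [← hHedge]
    exact c.edges_subset_edgeSet he
  set P : Set (Sym2 V) := R \ C with hPdef
  have hPR : P ⊆ R := Set.diff_subset
  -- degree bound in H
  have hdegH : ∀ v, (H.neighborSet v).ncard ≤ 2 := by
    intro v
    have hsplit : G.neighborSet v = (fromEdgeSet T).neighborSet v ∪ H.neighborSet v := by
      ext u
      simp only [mem_neighborSet, Set.mem_union, hHdef, fromEdgeSet_adj]
      constructor
      · intro h
        by_cases ht : s(v, u) ∈ T
        · exact Or.inl ⟨ht, h.ne⟩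
        · exact Or.inr ⟨⟨h, ht⟩, h.ne⟩
      · rintro (⟨ht, hne⟩ | ⟨hr, hne⟩)
        · exact (G.mem_edgeSet).mp (hTsub ht)
        · exact (G.mem_edgeSet).mp hr.1
    have hdisj : Disjoint ((fromEdgeSet T).neighborSet v) (H.neighborSet v) := by
      rw [Set.disjoint_left]
      rintro u h1 h2
      rw [mem_neighborSet, fromEdgeSet_adj] at h1
      rw [mem_neighborSet, hHdef, fromEdgeSet_adj] at h2
      exact h2.1.2 h1.1
    have hT1 : 1 ≤ ((fromEdgeSet T).neighborSet v).ncard := by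
      have h3 := hcubic v
      have hvne : (G.neighborSet v).Nonempty := by
        apply Set.nonempty_of_ncard_ne_zero; omega
      obtain ⟨u, hu⟩ := hvne
      have hu' : G.Adj v u := hu
      obtain ⟨p⟩ := hTconn.preconnected v u
      cases p with
      | nil => exact absurd rfl hu'.ne
      | @cons _ w _ h q =>
        have hw : w ∈ (fromEdgeSet T).neighborSet v := h
        have : ({w} : Set V) ⊆ (fromEdgeSet T).neighborSet v := by
          simpa using hw
        simpa using Set.ncard_le_ncard this (Set.toFinite _)
    have hcongr := congrArg Set.ncard hsplit
    rw [Set.ncard_union_eq hdisj (Set.toFinite _) (Set.toFinite _)] at hcongr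
    have h3 := hcubic v
    omega
  refine ⟨T, P, C, ?_, ?_, ?_, ?_, hTconn, hTacyc, ?_, ?_, ?_⟩
  · rw [Set.union_assoc, hPdef, Set.diff_union_of_subset hCR, hRdef,
      Set.union_diff_cancel hTsub]
  · rw [Set.disjoint_left]
    intro e he hP
    exact (hPR hP).2 he
  · rw [Set.disjoint_left]
    intro e he hC
    exact (hCR hC).2 he
  · exact Set.disjoint_sdiff_left
  · -- acyclic P
    intro v c hc
    have hPH : ∀ e ∈ c.edges, e ∈ H.edgeSet := by
      intro e he
      have h1 := c.edges_subset_edgeSet he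
      rw [edgeSet_fromEdgeSet] at h1
      rw [hHedge]
      exact hPR h1.1
    have hc' := hc.transfer hPH
    obtain ⟨a, b, hab, h1, h2⟩ := cycle_two_neighbors _ hc'
    have heC : s(v, a) ∈ C := ⟨v, c.transfer H hPH, hc', h1⟩
    have heP : s(v, a) ∈ P := by
      have h1' : s(v, a) ∈ c.edges := by rwa [Walk.edges_transfer] at h1
      have h3 := c.edges_subset_edgeSet h1'
      rw [edgeSet_fromEdgeSet] at h3
      exact h3.1
    exact heP.2 heC
  · -- deg P ≤ 2
    intro v
    refine le_trans (Set.ncard_le_ncard ?_ (Set.toFinite _)) (hdegH v)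
    intro u hu
    rw [mem_neighborSet, fromEdgeSet_adj] at hu
    rw [mem_neighborSet, hHdef, fromEdgeSet_adj]
    exact ⟨hPR hu.1, hu.2⟩
  · -- deg C = 0 or 2
    intro v
    have hsub : (fromEdgeSet C).neighborSet v ⊆ H.neighborSet v := by
      intro u hu
      rw [mem_neighborSet, fromEdgeSet_adj] at hu
      rw [mem_neighborSet, hHdef, fromEdgeSet_adj]
      exact ⟨hCR hu.1, hu.2⟩
    have hle : ((fromEdgeSet C).neighborSet v).ncard ≤ 2 :=
      le_trans (Set.ncard_le_ncard hsub (Set.toFinite _)) (hdegH v)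
    by_cases h0 : ((fromEdgeSet C).neighborSet v).ncard = 0
    · exact Or.inl h0
    right
    obtain ⟨u, hu⟩ := Set.nonempty_of_ncard_ne_zero h0
    have hadj : (fromEdgeSet C).Adj v u := hu
    rw [fromEdgeSet_adj] at hadj
    obtain ⟨⟨w, c, hc, hec⟩, hvu⟩ := hadj
    have hv : v ∈ c.support := Walk.fst_mem_support_of_mem_edges c hec
    have hc' := hc.rotate hv
    obtain ⟨a, b, hab, h1, h2⟩ := cycle_two_neighbors _ hc'
    have haC : s(v, a) ∈ C := ⟨v, c.rotate v hv, hc', h1⟩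
    have hbC : s(v, b) ∈ C := ⟨v, c.rotate v hv, hc', h2⟩
    have haK : a ∈ (fromEdgeSet C).neighborSet v := by
      rw [mem_neighborSet, fromEdgeSet_adj]
      exact ⟨haC, ((c.rotate v hv).adj_of_mem_edges h1).ne⟩
    have hbK : b ∈ (fromEdgeSet C).neighborSet v := by
      rw [mem_neighborSet, fromEdgeSet_adj]
      exact ⟨hbC, ((c.rotate v hv).adj_of_mem_edges h2).ne⟩
    have h2le : 2 ≤ ((fromEdgeSet C).neighborSet v).ncard := by
      have hss : ({a, b} : Set V) ⊆ (fromEdgeSet C).neighborSet v := by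
        rintro x (rfl | rfl) <;> assumption
      calc 2 = ({a, b} : Set V).ncard := (Set.ncard_pair hab).symm
        _ ≤ _ := Set.ncard_le_ncard hss (Set.toFinite _)
    omega


/-- Every connected cubic graph decomposes into a spanning tree,
a collection of vertex-disjoint paths (a linear forest) and a collection of
vertex-disjoint cycles (a 2-regular-or-isolated graph). -/
theorem stmt_1 {V : Type} [Finite V] (G : SimpleGraph V) (hconn : G.Connected)
    (hcubic : ∀ v, deg G v = 3) :
    ∃ T P C : Set (Sym2 V),
      T ∪ P ∪ C = G.edgeSet ∧ Disjoint T P ∧ Disjoint T C ∧ Disjoint P C ∧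
      (SimpleGraph.fromEdgeSet T).Connected ∧ (SimpleGraph.fromEdgeSet T).IsAcyclic ∧
      (SimpleGraph.fromEdgeSet P).IsAcyclic ∧
      (∀ v, deg (SimpleGraph.fromEdgeSet P) v ≤ 2) ∧
      (∀ v, deg (SimpleGraph.fromEdgeSet C) v = 0 ∨ deg (SimpleGraph.fromEdgeSet C) v = 2) := by
  exact stmt_1_aux G hconn hcubic
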